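/- arXiv:2010.01498 — 6 statements merged into one kernel-verified Lean document; each statement's English description precedes it below -/
import Mathlib

section
/- For the Gaussian window g(t) = (1/√(2π)) e^{-t²/2}, the modulus of its polynomial Fourier transform satisfies |ğ(η,λ)| = (1+4π²λ²)^{-1/4} · exp(-2π²η²/(1+4π²λ²)) for all η, λ ∈ ℝ. -/
open MeasureTheory Real

/-- The Gaussian window `g(t) = (1/√(2π)) e^{-t²/2}`. -/
noncomputable def gwin (t : ℝ) : ℝ := (1 / Real.sqrt (2 * Real.pi)) * Real.exp (-t ^ 2 / 2)

/-- The order-2 polynomial Fourier transform `ğ(η,λ) = ∫ g(τ) e^{-i2πητ - iπλτ²} dτ`. -/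
noncomputable def pft (η lam : ℝ) : ℂ :=
  ∫ τ : ℝ, (gwin τ : ℂ) *
    Complex.exp (-((2 * Real.pi * η * τ + Real.pi * lam * τ ^ 2 : ℝ) : ℂ) * Complex.I)

/-- Modulus of the polynomial Fourier transform of the Gaussian window. -/
theorem stmt_1 (η lam : ℝ) :
    ‖pft η lam‖ =
      (1 + 4 * Real.pi ^ 2 * lam ^ 2) ^ (-(1 / 4) : ℝ) *
        Real.exp (-(2 * Real.pi ^ 2 * η ^ 2) / (1 + 4 * Real.pi ^ 2 * lam ^ 2)) := by
  have hπ := Real.pi_pos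
  set A : ℝ := 1 + 4 * Real.pi ^ 2 * lam ^ 2 with hA
  have hA0 : 0 < A := by positivity
  set b : ℂ := -(1/2) - Real.pi * lam * Complex.I with hb
  have hbre : b.re < 0 := by simp [hb]
  set c : ℂ := -(2 * Real.pi * η) * Complex.I with hc
  have key : pft η lam = (1 / Real.sqrt (2 * Real.pi) : ℂ) *
      ((Real.pi / -b) ^ (1/2 : ℂ) * Complex.exp (0 - c^2 / (4 * b))) := by
    rw [← integral_cexp_quadratic hbre c 0, ← integral_const_mul]
    unfold pft gwin
    congr 1; ext τ
    push_cast
    rw [mul_assoc, ← Complex.exp_add]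
    congr 1
    rw [hb, hc]
    ring
  rw [key, norm_mul, norm_mul]
  have h1 : ‖(1 / (Real.sqrt (2 * Real.pi) : ℂ))‖ = 1 / Real.sqrt (2 * Real.pi) := by
    rw [norm_div, norm_one, Complex.norm_real, Real.norm_eq_abs, abs_of_pos (by positivity)]
  have habsb : ‖b‖ = Real.sqrt (A / 4) := by
    rw [Complex.norm_def, Complex.normSq_apply, hb]
    congr 1
    simp [Complex.add_re, Complex.add_im]
    ring
  have h2 : ‖(Real.pi / -b) ^ (1/2 : ℂ)‖ = Real.sqrt (Real.pi / Real.sqrt (A/4)) := by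
    have e : ((1:ℂ)/2) = ((1/2 : ℝ) : ℂ) := by norm_num
    rw [e, Complex.norm_cpow_real, norm_div, norm_neg, habsb, Complex.norm_real, Real.norm_eq_abs,
      abs_of_pos hπ, ← Real.sqrt_eq_rpow]
  have h3 : (0 - c^2 / (4*b)).re = -(2 * Real.pi ^ 2 * η ^ 2) / A := by
    have hc2 : (0 : ℂ) - c^2 / (4*b) = ((4 * Real.pi^2 * η^2 : ℝ) : ℂ) / (4*b) := by
      rw [hc]
      push_cast
      rw [mul_pow, Complex.I_sq]
      ring
    rw [hc2, Complex.div_re]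
    simp [hb, Complex.normSq_apply, Complex.mul_re, Complex.mul_im, ← Complex.ofReal_pow]
    rw [hA]
    have hd : (4 * 2⁻¹ * (4 * 2⁻¹) + 4 * (Real.pi * lam) * (4 * (Real.pi * lam)) : ℝ)
        = 4 * (1 + 4 * Real.pi ^ 2 * lam ^ 2) := by ring
    rw [hd, div_eq_div_iff (by positivity) (by positivity)]
    ring
  rw [h1, h2, Complex.norm_exp, h3, ← mul_assoc]
  congr 1
  -- (1/√(2π)) * √(π / √(A/4)) = A ^ (-(1/4))
  have hsA : Real.sqrt (A/4) = Real.sqrt A / 2 := by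
    rw [show (A/4 : ℝ) = A / 2^2 by ring, Real.sqrt_div hA0.le, Real.sqrt_sq (by norm_num)]
  have hsApos : 0 < Real.sqrt A := Real.sqrt_pos.mpr hA0
  rw [hsA, one_div, ← Real.sqrt_inv, ← Real.sqrt_mul (by positivity)]
  have h5 : (2 * Real.pi)⁻¹ * (Real.pi / (Real.sqrt A / 2)) = A ^ (-(1/2) : ℝ) := by
    rw [Real.rpow_neg hA0.le, ← Real.sqrt_eq_rpow]
    field_simp
  rw [h5, Real.sqrt_eq_rpow, ← Real.rpow_mul hA0.le]
  norm_num
end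

section
/- For the Gaussian window g(t) = (1/√(2π)) e^{-t²/2}, there exists a constant C > 0 such that |ğ(η,λ)| ≤ C / √(|η| + |λ|) for all (η,λ) ≠ (0,0). -/
open MeasureTheory Real

lemma pft_eq (η lam : ℝ) :
    pft η lam = (1 / Real.sqrt (2 * π) : ℝ) *
      ((↑π / -(-(1/2 : ℂ) - π * lam * Complex.I)) ^ (1/2 : ℂ) *
        Complex.exp (0 - ((-2 * π * η : ℂ) * Complex.I) ^ 2 /
          (4 * (-(1/2 : ℂ) - π * lam * Complex.I)))) := by
  have ha : (-(1/2 : ℂ) - π * lam * Complex.I).re < 0 := by simp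
  have key := integral_cexp_quadratic ha ((-2 * π * η : ℂ) * Complex.I) 0
  rw [pft]
  have hpt : ∀ τ : ℝ, (gwin τ : ℂ) *
      Complex.exp (-((2 * Real.pi * η * τ + Real.pi * lam * τ ^ 2 : ℝ) : ℂ) * Complex.I) =
      (1 / Real.sqrt (2 * π) : ℝ) *
      Complex.exp ((-(1/2 : ℂ) - π * lam * Complex.I) * τ ^ 2 +
        ((-2 * π * η : ℂ) * Complex.I) * τ + 0) := by
    intro τ
    rw [gwin]
    push_cast
    rw [mul_assoc, ← Complex.exp_add]
    congr 2
    ring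
  simp_rw [hpt]
  rw [MeasureTheory.integral_const_mul, key]

lemma abs_pft (η lam : ℝ) :
    ‖pft η lam‖ =
      Real.sqrt (π / Real.sqrt (1/4 + π^2*lam^2)) / Real.sqrt (2*π)
      * Real.exp (-(π^2*η^2) / (2*(1/4 + π^2*lam^2))) := by
  have hπ := Real.pi_pos
  have hden : (0:ℝ) < 1/4 + π^2*lam^2 := by positivity
  have ha0 : (-(1/2 : ℂ) - π * lam * Complex.I) ≠ 0 := by
    intro h
    have := congrArg Complex.re h
    simp at this
  rw [pft_eq, norm_mul, norm_mul]
  have h1 : ‖((1 / Real.sqrt (2 * π) : ℝ) : ℂ)‖ = 1 / Real.sqrt (2*π) := by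
    rw [Complex.norm_real, Real.norm_eq_abs, abs_of_pos (by positivity)]
  have hna : ‖-(-(1/2 : ℂ) - π * lam * Complex.I)‖
      = Real.sqrt (1/4 + π^2*lam^2) := by
    have h : -(-(1/2 : ℂ) - π * lam * Complex.I) = ((1/2 : ℝ) : ℂ) + (π*lam : ℝ)*Complex.I := by
      push_cast; ring
    rw [h, Complex.norm_add_mul_I]
    ring_nf
  have h2 : ‖(↑π / -(-(1/2 : ℂ) - π * lam * Complex.I)) ^ (1/2 : ℂ)‖
      = Real.sqrt (π / Real.sqrt (1/4 + π^2*lam^2)) := by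
    nth_rewrite 2 [show (1/2 : ℂ) = ((1/2 : ℝ) : ℂ) by norm_num]
    rw [Complex.norm_cpow_real, norm_div, hna, Complex.norm_real, Real.norm_eq_abs,
      abs_of_pos hπ, Real.sqrt_eq_rpow, Real.sqrt_eq_rpow]
  have h3 : ‖Complex.exp (0 - ((-2 * π * η : ℂ) * Complex.I) ^ 2 /
        (4 * (-(1/2 : ℂ) - π * lam * Complex.I)))‖
      = Real.exp (-(π^2*η^2) / (2*(1/4 + π^2*lam^2))) := by
    have h4 : (4 : ℂ) * (-(1/2 : ℂ) - π * lam * Complex.I) ≠ 0 :=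
      mul_ne_zero (by norm_num) ha0
    have hz : (0 - ((-2 * π * η : ℂ) * Complex.I) ^ 2 /
        (4 * (-(1/2 : ℂ) - π * lam * Complex.I)))
        = ((π^2*η^2 : ℝ) : ℂ) / (-(1/2 : ℂ) - π * lam * Complex.I) := by
      rw [zero_sub, ← neg_div, div_eq_div_iff h4 ha0]
      push_cast
      linear_combination (-4*(π:ℂ)^2*η^2*(-(1/2:ℂ) - π*lam*Complex.I)) * Complex.I_sq
    rw [hz, Complex.norm_exp]
    congr 1
    rw [Complex.div_re, Complex.normSq_apply]
    simp only [Complex.sub_re, Complex.neg_re, Complex.mul_re, Complex.mul_im, Complex.sub_im,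
      Complex.neg_im, Complex.I_re, Complex.I_im, Complex.ofReal_re, Complex.ofReal_im,
      Complex.one_re]
    norm_num
    have hq : (0:ℝ) < 1/4 + π*lam*(π*lam) := by nlinarith [sq_nonneg (π*lam)]
    rw [div_eq_div_iff hq.ne' (by positivity : (0:ℝ) < 2*(1/4 + π^2*lam^2)).ne']
    ring
  rw [h1, h2, h3]
  ring

/-- Decay bound: there is  with  for . -/
theorem stmt_3 :
    ∃ C : ℝ, 0 < C ∧ ∀ η lam : ℝ, (η, lam) ≠ (0, 0) →
      ‖pft η lam‖ ≤ C / Real.sqrt (|η| + |lam|) := by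
  refine ⟨1, one_pos, fun η lam h => ?_⟩
  have hπ := Real.pi_pos
  have hπ1' : (1:ℝ) ≤ π := by nlinarith [Real.pi_gt_three]
  set D : ℝ := 1/4 + π^2*lam^2 with hD
  have hDpos : (0:ℝ) < D := by positivity
  set r : ℝ := Real.sqrt D with hrdef
  have hr : 0 < r := Real.sqrt_pos.mpr hDpos
  have hr2 : r^2 = D := Real.sq_sqrt hDpos.le
  set x : ℝ := |η| + |lam| with hx
  have hxpos : 0 < x := by
    have hne : η ≠ 0 ∨ lam ≠ 0 := by
      by_contra hc
      push_neg at hc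
      exact h (by rw [hc.1, hc.2])
    rcases hne with h' | h'
    · exact add_pos_of_pos_of_nonneg (abs_pos.mpr h') (abs_nonneg _)
    · exact add_pos_of_nonneg_of_pos (abs_nonneg _) (abs_pos.mpr h')
  set E : ℝ := Real.exp (-(π^2*η^2)/D) with hE
  have hEpos : 0 < E := Real.exp_pos _
  have hE1 : E ≤ 1 := by
    rw [hE]
    apply Real.exp_le_one_iff.mpr
    apply div_nonpos_of_nonpos_of_nonneg (by nlinarith) hDpos.le
  have hlam_r : |lam| ≤ r := by
    have h1 : Real.sqrt (π^2*lam^2) ≤ r := Real.sqrt_le_sqrt (by rw [hD]; nlinarith)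
    have h2 : Real.sqrt (π^2*lam^2) = π*|lam| := by
      rw [show π^2*lam^2 = (π*|lam|)^2 by rw [mul_pow, sq_abs],
        Real.sqrt_sq (by positivity)]
    nlinarith [abs_nonneg lam]
  have hη_r : |η| * E ≤ r := by
    rcases le_or_gt |η| r with hc | hc
    · calc |η| * E ≤ |η| * 1 := mul_le_mul_of_nonneg_left hE1 (abs_nonneg η)
        _ = |η| := mul_one _
        _ ≤ r := hc
    · have ht : 0 < |η| / r := div_pos (hr.trans hc) hr
      have hexp : E ≤ Real.exp (-(|η|/r)) := by
        rw [hE]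
        apply Real.exp_le_exp.mpr
        rw [← hr2, neg_div, neg_le_neg_iff, div_le_div_iff₀ hr (pow_pos hr 2)]
        have e1 : |η| * r ≤ η^2 := by
          nlinarith [mul_le_mul_of_nonneg_left hc.le (abs_nonneg η), sq_abs η]
        have e2 : η^2 * r ≤ π^2*η^2*r := by
          nlinarith [mul_nonneg (mul_nonneg (by nlinarith : (0:ℝ) ≤ π^2 - 1) (sq_nonneg η)) hr.le]
        nlinarith [mul_le_mul_of_nonneg_right e1 hr.le, e2]
      have hexp2 : Real.exp (-(|η|/r)) ≤ r/|η| := by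
        rw [Real.exp_neg]
        have h1 : |η|/r ≤ Real.exp (|η|/r) := by
          nlinarith [Real.add_one_le_exp (|η|/r)]
        calc (Real.exp (|η|/r))⁻¹ ≤ (|η|/r)⁻¹ := by
              apply inv_anti₀ ht h1
          _ = r/|η| := by rw [inv_div]
      calc |η| * E ≤ |η| * (r/|η|) := mul_le_mul_of_nonneg_left (hexp.trans hexp2) (abs_nonneg η)
        _ = r := by rw [mul_comm, div_mul_cancel₀ r (ne_of_gt (hr.trans hc))]
  have key : x * E ≤ 2 * r := by
    have h1 : |lam| * E ≤ r := by
      calc |lam| * E ≤ |lam| * 1 := mul_le_mul_of_nonneg_left hE1 (abs_nonneg lam)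
        _ = |lam| := mul_one _
        _ ≤ r := hlam_r
    calc x * E = |η| * E + |lam| * E := by rw [hx]; ring
      _ ≤ r + r := add_le_add hη_r h1
      _ = 2 * r := by ring
  rw [abs_pft]
  set A : ℝ := Real.sqrt (π / Real.sqrt (1/4 + π^2*lam^2)) / Real.sqrt (2*π)
      * Real.exp (-(π^2*η^2) / (2*(1/4 + π^2*lam^2))) with hA
  have hAsq : A^2 = 1/(2*r) * E := by
    have exp2 : Real.exp (-(π^2*η^2) / (2*(1/4 + π^2*lam^2))) ^ 2 = E := by
      rw [← Real.exp_nat_mul, hE, hD]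
      congr 1
      have hne : (1/4 + π^2*lam^2 : ℝ) ≠ 0 := by positivity
      push_cast
      field_simp
    have hsr : Real.sqrt (1/4 + π^2*lam^2) = r := by rw [hrdef, hD]
    rw [hA, mul_pow, div_pow, Real.sq_sqrt (by positivity : (0:ℝ) ≤ π / Real.sqrt (1/4 + π^2*lam^2)),
      Real.sq_sqrt (by positivity : (0:ℝ) ≤ 2*π), exp2, hsr]
    field_simp
  have hAx : A^2 ≤ 1/x := by
    rw [hAsq]
    rw [div_mul_eq_mul_div, one_mul, div_le_div_iff₀ (by positivity) hxpos]
    linarith [key]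
  calc A ≤ Real.sqrt (1/x) := Real.le_sqrt_of_sq_le hAx
    _ = 1 / Real.sqrt x := by rw [one_div, Real.sqrt_inv, one_div]
end

section
/- Suppose x(t) = Σ_{k=0}^{K} A_k(t) e^{i2π φ_k(t)} where for each k: A_k ∈ L∞(ℝ), A_k(t) > 0, φ_k ∈ C³(ℝ), |A_k(t+τ) - A_k(t)| ≤ α³ B₁ |τ| A_k(t) for all t, τ, and sup_t |φ'''_k(t)| ≤ α⁷ B₂. Let x_m(t,τ) = Σ_{k=0}^{K} A_k(t) e^{i2π φ_k(t)} e^{i2π(φ'_k(t)τ + (1/2)φ''_k(t)τ²)} and M(t) = Σ_{k=0}^{K} A_k(t). Then for all t, τ ∈ ℝ: |x(t+τ) - x_m(t,τ)| ≤ M(t)(B₁ α³ |τ| + (π/3) B₂ α⁷ |τ|³). -/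
open MeasureTheory Real Finset

private lemma iterWithin_eq {f : ℝ → ℝ} (hf : ContDiff ℝ 3 f) {s : Set ℝ}
    (hs : UniqueDiffOn ℝ s) : ∀ n : ℕ, n ≤ 3 → ∀ x ∈ s,
    iteratedDerivWithin n f s x = iteratedDeriv n f x := by
  intro n
  induction n with
  | zero => intro _ x hx; simp [iteratedDerivWithin_zero, iteratedDeriv_zero]
  | succ n ih =>
    intro hn x hx
    have hn' : n ≤ 3 := by omega
    have hdiff : Differentiable ℝ (iteratedDeriv n f) :=
      hf.differentiable_iteratedDeriv n (by exact_mod_cast (by omega : n < 3))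
    rw [iteratedDerivWithin_succ, iteratedDeriv_succ]
    rw [derivWithin_congr (fun y hy => ih hn' y hy) (ih hn' x hx)]
    exact (hdiff x).derivWithin (hs x hx)

private lemma taylor3_right {f : ℝ → ℝ} (hf : ContDiff ℝ 3 f) {C : ℝ}
    (hC : ∀ s, |iteratedDeriv 3 f s| ≤ C) (t τ : ℝ) (hτ : 0 < τ) :
    |f (t + τ) - (f t + deriv f t * τ + (1/2) * deriv (deriv f) t * τ^2)| ≤ C * |τ|^3 / 6 := by
  have hlt : t < t + τ := by linarith
  have huniq := uniqueDiffOn_Icc hlt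
  have hfo : ContDiffOn ℝ 2 f (Set.Icc t (t+τ)) :=
    (hf.of_le (by norm_num)).contDiffOn
  have hder : DifferentiableOn ℝ (iteratedDerivWithin 2 f (Set.Icc t (t+τ)))
      (Set.Ioo t (t+τ)) := by
    have hd2 : Differentiable ℝ (iteratedDeriv 2 f) :=
      hf.differentiable_iteratedDeriv 2 (by norm_num)
    refine (hd2.differentiableOn).congr ?_
    intro y hy
    exact iterWithin_eq hf huniq 2 (by norm_num) y (Set.Ioo_subset_Icc_self hy)
  obtain ⟨x', hx', hrem⟩ := taylor_mean_remainder_lagrange (n := 2) hlt.ne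
    (by rw [Set.uIcc_of_le hlt.le]; exact hfo) (by rw [Set.uIcc_of_le hlt.le, Set.uIoo_of_lt hlt]; exact hder)
  rw [Set.uIcc_of_le hlt.le] at hrem
  rw [Set.uIoo_of_lt hlt] at hx'
  have htay : taylorWithinEval f 2 (Set.Icc t (t+τ)) t (t+τ)
      = f t + deriv f t * τ + (1/2) * deriv (deriv f) t * τ^2 := by
    rw [taylor_within_apply]
    have h0 := iterWithin_eq hf huniq 0 (by norm_num) t (Set.left_mem_Icc.2 hlt.le)
    have h1 := iterWithin_eq hf huniq 1 (by norm_num) t (Set.left_mem_Icc.2 hlt.le)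
    have h2 := iterWithin_eq hf huniq 2 (by norm_num) t (Set.left_mem_Icc.2 hlt.le)
    rw [Finset.sum_range_succ, Finset.sum_range_succ, Finset.sum_range_one,
      h0, h1, h2, iteratedDeriv_zero, iteratedDeriv_one,
      show iteratedDeriv 2 f = deriv (deriv f) by
        rw [iteratedDeriv_succ, iteratedDeriv_one]]
    simp [smul_eq_mul]
    ring
  have h3 : iteratedDerivWithin 3 f (Set.Icc t (t+τ)) x' = iteratedDeriv 3 f x' :=
    iterWithin_eq hf huniq 3 le_rfl x' (Set.Ioo_subset_Icc_self hx')
  rw [htay] at hrem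
  rw [hrem, h3]
  have ht : t + τ - t = τ := by ring
  rw [ht]
  have hfac : ((Nat.factorial (2 + 1) : ℝ)) = 6 := by norm_num [Nat.factorial]
  rw [hfac, abs_div, abs_mul, abs_pow, abs_of_nonneg (by norm_num : (0:ℝ) ≤ 6)]
  have hC0 : 0 ≤ |τ|^3 / 6 := by positivity
  calc |iteratedDeriv 3 f x'| * |τ|^(2+1) / 6 = |iteratedDeriv 3 f x'| * (|τ|^3 / 6) := by ring
    _ ≤ C * (|τ|^3 / 6) := mul_le_mul_of_nonneg_right (hC x') hC0
    _ = C * |τ|^3 / 6 := by ring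

private lemma iteratedDeriv_reflect (n : ℕ) (f : ℝ → ℝ) (c x : ℝ) :
    iteratedDeriv n (fun s => f (c - s)) x = (-1:ℝ)^n * iteratedDeriv n f (c - x) := by
  calc iteratedDeriv n (fun s => f (c - s)) x
      = iteratedDeriv n (fun z : ℝ => f (-z)) (x + -c) := by
        rw [show (fun s : ℝ => f (c - s)) = (fun z : ℝ => (fun w : ℝ => f (-w)) (z + -c)) from
          by funext s; simp only []; congr 1; ring]
        exact congrFun (iteratedDeriv_comp_add_const n (fun z : ℝ => f (-z)) (-c)) x
    _ = (-1:ℝ)^n * iteratedDeriv n f (c - x) := by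
        rw [iteratedDeriv_comp_neg, smul_eq_mul]
        congr 1
        ring

private lemma taylor3 {f : ℝ → ℝ} (hf : ContDiff ℝ 3 f) {C : ℝ}
    (hC : ∀ s, |iteratedDeriv 3 f s| ≤ C) (t τ : ℝ) :
    |f (t + τ) - (f t + deriv f t * τ + (1/2) * deriv (deriv f) t * τ^2)| ≤ C * |τ|^3 / 6 := by
  rcases lt_trichotomy τ 0 with hneg | rfl | hpos
  · -- reflect
    set g : ℝ → ℝ := fun s => f (2*t - s) with hg
    have hgc : ContDiff ℝ 3 g := hf.comp (contDiff_const.sub contDiff_id)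
    have hgC : ∀ s, |iteratedDeriv 3 g s| ≤ C := by
      intro s
      rw [hg, iteratedDeriv_reflect 3 f (2*t) s]
      simpa [abs_mul] using hC (2*t - s)
    have h1 : deriv g t = -deriv f t := by
      have := iteratedDeriv_reflect 1 f (2*t) t
      simpa [iteratedDeriv_one, hg, show 2*t - t = t by ring] using this
    have h2 : deriv (deriv g) t = deriv (deriv f) t := by
      have e2 : ∀ h : ℝ → ℝ, deriv (deriv h) t = iteratedDeriv 2 h t := by
        intro h; rw [iteratedDeriv_succ, iteratedDeriv_one]
      rw [e2 g, e2 f]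
      have := iteratedDeriv_reflect 2 f (2*t) t
      simpa [hg, show 2*t - t = t by ring] using this
    have hb := taylor3_right hgc hgC t (-τ) (by linarith)
    have hgv : g (t + -τ) = f (t + τ) := by rw [hg]; ring_nf
    have hgt : g t = f t := by rw [hg]; ring_nf
    rw [hgv, hgt, h1, h2] at hb
    have : f t + -deriv f t * -τ + 1/2 * deriv (deriv f) t * (-τ)^2
        = f t + deriv f t * τ + 1/2 * deriv (deriv f) t * τ^2 := by ring
    rw [this, abs_neg] at hb
    exact hb
  · have hC0 : 0 ≤ C := le_trans (abs_nonneg _) (hC 0)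
    norm_num
  · exact taylor3_right hf hC t τ hpos

private lemma exp_I_sub_one_le (θ : ℝ) :
    norm (Complex.exp (θ * Complex.I) - 1) ≤ |θ| := by
  rw [Complex.exp_mul_I]
  have h1 : Complex.cos θ + Complex.sin θ * Complex.I - 1
      = ((Real.cos θ - 1 : ℝ) : ℂ) + ((Real.sin θ : ℝ) : ℂ) * Complex.I := by
    push_cast [Complex.ofReal_cos, Complex.ofReal_sin]
    ring
  rw [h1, Complex.norm_add_mul_I]
  have h2 : (Real.cos θ - 1)^2 + (Real.sin θ)^2 ≤ θ^2 := by
    have hpy := Real.sin_sq_add_cos_sq θ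
    have hc := Real.one_sub_sq_div_two_le_cos (x := θ)
    nlinarith
  calc Real.sqrt ((Real.cos θ - 1)^2 + Real.sin θ^2) ≤ Real.sqrt (θ^2) :=
        Real.sqrt_le_sqrt h2
    _ = |θ| := Real.sqrt_sq_eq_abs θ

private lemma term_bound (a a' θ₁ θ₂ : ℝ) (ha : 0 ≤ a) :
    norm ((a' : ℂ) * Complex.exp ((θ₁ : ℂ) * Complex.I)
      - (a : ℂ) * Complex.exp ((θ₂ : ℂ) * Complex.I))
    ≤ |a' - a| + a * |θ₁ - θ₂| := by
  have key : (a' : ℂ) * Complex.exp ((θ₁ : ℂ) * Complex.I)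
      - (a : ℂ) * Complex.exp ((θ₂ : ℂ) * Complex.I)
      = ((a' : ℂ) - a) * Complex.exp ((θ₁ : ℂ) * Complex.I)
        + (a : ℂ) * Complex.exp ((θ₂ : ℂ) * Complex.I)
          * (Complex.exp (((θ₁ - θ₂ : ℝ) : ℂ) * Complex.I) - 1) := by
    have he : Complex.exp ((θ₁ : ℂ) * Complex.I)
        = Complex.exp ((θ₂ : ℂ) * Complex.I)
          * Complex.exp (((θ₁ - θ₂ : ℝ) : ℂ) * Complex.I) := by
      rw [← Complex.exp_add]
      congr 1
      push_cast
      ring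
    rw [he]
    ring
  rw [key]
  calc norm _ ≤ norm (((a' : ℂ) - a) * Complex.exp ((θ₁ : ℂ) * Complex.I))
        + norm ((a : ℂ) * Complex.exp ((θ₂ : ℂ) * Complex.I)
          * (Complex.exp (((θ₁ - θ₂ : ℝ) : ℂ) * Complex.I) - 1)) := norm_add_le _ _
    _ ≤ |a' - a| + a * |θ₁ - θ₂| := by
        rw [norm_mul, norm_mul, norm_mul, Complex.norm_exp_ofReal_mul_I, Complex.norm_exp_ofReal_mul_I]
        have h1 : norm ((a' : ℂ) - a) = |a' - a| := by
          rw [← Complex.ofReal_sub, Complex.norm_real, Real.norm_eq_abs]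
        have h2 : norm ((a : ℂ)) = a := by
          rw [Complex.norm_real, Real.norm_eq_abs, abs_of_nonneg ha]
        rw [h1, h2]
        have := exp_I_sub_one_le (θ₁ - θ₂)
        nlinarith [abs_nonneg (a' - a), norm_nonneg
          (Complex.exp (((θ₁ - θ₂ : ℝ) : ℂ) * Complex.I) - 1)]

/-- Linear-chirp local approximation error bound (Lemma 1): for a multicomponent signal
`x(t) = Σ A_k(t) e^{i2πφ_k(t)}` with slowly varying amplitudes and bounded third phase
derivatives, the local linear-chirp model approximates `x(t+τ)` with error
`M(t)(B₁α³|τ| + (π/3)B₂α⁷|τ|³)`. -/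
theorem stmt_5 (K : ℕ) (A φ : Fin (K + 1) → ℝ → ℝ) (α B₁ B₂ : ℝ)
    (hα : 0 < α) (hB₁ : 0 < B₁) (hB₂ : 0 < B₂)
    (hAbdd : ∀ k, ∃ C : ℝ, ∀ t, |A k t| ≤ C)
    (hApos : ∀ k t, 0 < A k t)
    (hφsmooth : ∀ k, ContDiff ℝ 3 (φ k))
    (hA : ∀ k t τ, |A k (t + τ) - A k t| ≤ α ^ 3 * B₁ * |τ| * A k t)
    (hφ3 : ∀ k t, |iteratedDeriv 3 (φ k) t| ≤ α ^ 7 * B₂) :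
    ∀ t τ : ℝ,
      norm
        ((∑ k, (A k (t + τ) : ℂ) *
            Complex.exp (((2 * Real.pi * φ k (t + τ) : ℝ) : ℂ) * Complex.I)) -
         ∑ k, (A k t : ℂ) *
            Complex.exp (((2 * Real.pi * φ k t : ℝ) : ℂ) * Complex.I) *
            Complex.exp (((2 * Real.pi *
              (deriv (φ k) t * τ + (1 / 2) * deriv (deriv (φ k)) t * τ ^ 2) : ℝ) : ℂ) *
              Complex.I))
      ≤ (∑ k, A k t) * (B₁ * α ^ 3 * |τ| + (Real.pi / 3) * B₂ * α ^ 7 * |τ| ^ 3) := by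
  intro t τ
  rw [← Finset.sum_sub_distrib]
  calc norm _ ≤ ∑ k, norm
        ((A k (t + τ) : ℂ) * Complex.exp (((2 * Real.pi * φ k (t + τ) : ℝ) : ℂ) * Complex.I)
          - (A k t : ℂ) * Complex.exp (((2 * Real.pi * φ k t : ℝ) : ℂ) * Complex.I)
            * Complex.exp (((2 * Real.pi *
              (deriv (φ k) t * τ + (1 / 2) * deriv (deriv (φ k)) t * τ ^ 2) : ℝ) : ℂ) *
              Complex.I)) := by
        exact norm_sum_le _ _
    _ ≤ ∑ k, A k t * (B₁ * α ^ 3 * |τ| + (Real.pi / 3) * B₂ * α ^ 7 * |τ| ^ 3) := by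
        apply Finset.sum_le_sum
        intro k _
        have hmerge : (A k t : ℂ) * Complex.exp (((2 * Real.pi * φ k t : ℝ) : ℂ) * Complex.I)
            * Complex.exp (((2 * Real.pi *
              (deriv (φ k) t * τ + (1 / 2) * deriv (deriv (φ k)) t * τ ^ 2) : ℝ) : ℂ) *
              Complex.I)
            = (A k t : ℂ) * Complex.exp (((2 * Real.pi * φ k t + 2 * Real.pi *
              (deriv (φ k) t * τ + (1 / 2) * deriv (deriv (φ k)) t * τ ^ 2) : ℝ) : ℂ)
              * Complex.I) := by
          rw [mul_assoc, ← Complex.exp_add]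
          push_cast
          ring_nf
        rw [hmerge]
        have htb := term_bound (A k t) (A k (t + τ))
          (2 * Real.pi * φ k (t + τ))
          (2 * Real.pi * φ k t + 2 * Real.pi *
            (deriv (φ k) t * τ + (1 / 2) * deriv (deriv (φ k)) t * τ ^ 2))
          (hApos k t).le
        refine le_trans htb ?_
        have hA' := hA k t τ
        have hT := taylor3 (hφsmooth k) (hφ3 k) t τ
        have hθ : |2 * Real.pi * φ k (t + τ)
            - (2 * Real.pi * φ k t + 2 * Real.pi *
              (deriv (φ k) t * τ + (1 / 2) * deriv (deriv (φ k)) t * τ ^ 2))|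
            = 2 * Real.pi * |φ k (t + τ) - (φ k t + deriv (φ k) t * τ
              + (1/2) * deriv (deriv (φ k)) t * τ ^ 2)| := by
          rw [show 2 * Real.pi * φ k (t + τ)
            - (2 * Real.pi * φ k t + 2 * Real.pi *
              (deriv (φ k) t * τ + (1 / 2) * deriv (deriv (φ k)) t * τ ^ 2))
            = 2 * Real.pi * (φ k (t + τ) - (φ k t + deriv (φ k) t * τ
              + (1/2) * deriv (deriv (φ k)) t * τ ^ 2)) by ring]
          rw [abs_mul, abs_of_nonneg (by positivity : (0:ℝ) ≤ 2 * Real.pi)]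
        rw [hθ]
        have hAk : 0 < A k t := hApos k t
        have hπ : (0:ℝ) < Real.pi := Real.pi_pos
        calc |A k (t + τ) - A k t| + A k t * (2 * Real.pi * |φ k (t + τ) - (φ k t
              + deriv (φ k) t * τ + (1/2) * deriv (deriv (φ k)) t * τ ^ 2)|)
            ≤ α ^ 3 * B₁ * |τ| * A k t
              + A k t * (2 * Real.pi * (α ^ 7 * B₂ * |τ|^3 / 6)) := by
              gcongr
          _ = A k t * (B₁ * α ^ 3 * |τ| + (Real.pi / 3) * B₂ * α ^ 7 * |τ| ^ 3) := by ring
    _ = (∑ k, A k t) * (B₁ * α ^ 3 * |τ| + (Real.pi / 3) * B₂ * α ^ 7 * |τ| ^ 3) := by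
        rw [← Finset.sum_mul]
end

section
/- Let g ≥ 0 be a window with ∫_ℝ g = 1 and supp(g) ⊆ [-N, N]. Let x, x_m, M, α, B₁, B₂ be as in the linear-chirp approximation setting, so that |x(t+τ) - x_m(t,τ)| ≤ M(B₁α³|τ| + (π/3)B₂α⁷|τ|³). Define the chirplet transform 𝔖(η,λ) = ∫_ℝ x(t+τ) (1/σ) g(τ/σ) e^{-i2πητ - iπλτ²} dτ and its chirp approximation ℜ(η,λ) = ∫_ℝ x_m(t,τ) (1/σ) g(τ/σ) e^{-i2πητ - iπλτ²} dτ, with σ = c₀/α². Then for all η, λ: |𝔖(η,λ) - ℜ(η,λ)| ≤ α M (B₁ c₀ N + (π/3) B₂ c₀³ N³). -/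
open MeasureTheory Real

/-- Lemma 2: the chirplet transform of a signal and of its local linear-chirp approximation
differ by at most `α M (B₁ c₀ N + (π/3) B₂ c₀³ N³)`, where the window g ≥ 0 has unit
integral and support in [-N, N], and σ = c₀/α². -/
theorem stmt_6 (g : ℝ → ℝ) (N σ c₀ α M B₁ B₂ : ℝ)
    (hg0 : ∀ t, 0 ≤ g t) (hg1 : ∫ t : ℝ, g t = 1)
    (hsupp : Function.support g ⊆ Set.Icc (-N) N)
    (hN : 0 < N) (hα : 0 < α) (hc₀ : 0 < c₀) (hσ : σ = c₀ / α ^ 2)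
    (hM : 0 ≤ M) (hB₁ : 0 < B₁) (hB₂ : 0 < B₂)
    (x : ℝ → ℂ) (xm : ℝ → ℝ → ℂ) (t : ℝ)
    (hbound : ∀ τ : ℝ, ‖x (t + τ) - xm t τ‖ ≤
      M * (B₁ * α ^ 3 * |τ| + (Real.pi / 3) * B₂ * α ^ 7 * |τ| ^ 3))
    (η lam : ℝ)
    (hintx : Integrable (fun τ : ℝ => x (t + τ) * ((g (τ / σ) / σ : ℝ) : ℂ) *
      Complex.exp (-((2 * Real.pi * η * τ + Real.pi * lam * τ ^ 2 : ℝ) : ℂ) * Complex.I)))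
    (hintxm : Integrable (fun τ : ℝ => xm t τ * ((g (τ / σ) / σ : ℝ) : ℂ) *
      Complex.exp (-((2 * Real.pi * η * τ + Real.pi * lam * τ ^ 2 : ℝ) : ℂ) * Complex.I))) :
    ‖((∫ τ : ℝ, x (t + τ) * ((g (τ / σ) / σ : ℝ) : ℂ) *
          Complex.exp (-((2 * Real.pi * η * τ + Real.pi * lam * τ ^ 2 : ℝ) : ℂ) * Complex.I)) -
       ∫ τ : ℝ, xm t τ * ((g (τ / σ) / σ : ℝ) : ℂ) *
          Complex.exp (-((2 * Real.pi * η * τ + Real.pi * lam * τ ^ 2 : ℝ) : ℂ) * Complex.I))‖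
      ≤ α * M * (B₁ * c₀ * N + (Real.pi / 3) * B₂ * c₀ ^ 3 * N ^ 3) := by
  have hσ0 : 0 < σ := by rw [hσ]; positivity
  set K : ℝ := α * M * (B₁ * c₀ * N + (Real.pi / 3) * B₂ * c₀ ^ 3 * N ^ 3) with hK
  have hK0 : 0 ≤ K := by
    have := Real.pi_pos
    positivity
  have hgint : Integrable g := by
    by_contra h
    rw [integral_undef h] at hg1
    norm_num at hg1
  have hgσint : Integrable (fun τ : ℝ => K * (g (τ / σ) / σ)) := by
    exact ((hgint.comp_div (by positivity : (σ:ℝ) ≠ 0)).div_const σ).const_mul K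
  rw [← integral_sub hintx hintxm]
  have hptw : ∀ τ : ℝ,
      ‖x (t + τ) * ((g (τ / σ) / σ : ℝ) : ℂ) *
          Complex.exp (-((2 * Real.pi * η * τ + Real.pi * lam * τ ^ 2 : ℝ) : ℂ) * Complex.I) -
        xm t τ * ((g (τ / σ) / σ : ℝ) : ℂ) *
          Complex.exp (-((2 * Real.pi * η * τ + Real.pi * lam * τ ^ 2 : ℝ) : ℂ) * Complex.I)‖
      ≤ K * (g (τ / σ) / σ) := by
    intro τ
    have hfac : x (t + τ) * ((g (τ / σ) / σ : ℝ) : ℂ) *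
          Complex.exp (-((2 * Real.pi * η * τ + Real.pi * lam * τ ^ 2 : ℝ) : ℂ) * Complex.I) -
        xm t τ * ((g (τ / σ) / σ : ℝ) : ℂ) *
          Complex.exp (-((2 * Real.pi * η * τ + Real.pi * lam * τ ^ 2 : ℝ) : ℂ) * Complex.I)
        = (x (t + τ) - xm t τ) * ((g (τ / σ) / σ : ℝ) : ℂ) *
          Complex.exp (-((2 * Real.pi * η * τ + Real.pi * lam * τ ^ 2 : ℝ) : ℂ) * Complex.I) := by
      ring
    rw [hfac]
    have habsexp : ‖Complex.exp
        (-((2 * Real.pi * η * τ + Real.pi * lam * τ ^ 2 : ℝ) : ℂ) * Complex.I)‖ = 1 := by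
      have heI : (-((2 * Real.pi * η * τ + Real.pi * lam * τ ^ 2 : ℝ) : ℂ)) * Complex.I
          = (((-(2 * Real.pi * η * τ + Real.pi * lam * τ ^ 2) : ℝ)) : ℂ) * Complex.I := by
        push_cast; ring
      rw [heI, Complex.norm_exp_ofReal_mul_I]
    rw [show ‖(x (t + τ) - xm t τ) * ((g (τ / σ) / σ : ℝ) : ℂ) *
        Complex.exp (-((2 * Real.pi * η * τ + Real.pi * lam * τ ^ 2 : ℝ) : ℂ) * Complex.I)‖ =
        ‖x (t + τ) - xm t τ‖ * |g (τ / σ) / σ| *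
        ‖Complex.exp
          (-((2 * Real.pi * η * τ + Real.pi * lam * τ ^ 2 : ℝ) : ℂ) * Complex.I)‖ by
      simp only [norm_mul, Complex.norm_real, Real.norm_eq_abs]  ]
    rw [habsexp, mul_one]
    have hgabs : |g (τ / σ) / σ| = g (τ / σ) / σ := abs_of_nonneg (by
      exact div_nonneg (hg0 _) hσ0.le)
    rw [hgabs]
    by_cases hz : g (τ / σ) = 0
    · simp [hz]
    · have hmem : τ / σ ∈ Set.Icc (-N) N := hsupp hz
      have hτ : |τ| ≤ N * σ := by
        rw [abs_le]
        refine ⟨?_, (div_le_iff₀ hσ0).mp hmem.2⟩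
        have := (le_div_iff₀ hσ0).mp hmem.1
        linarith
      have hτ0 : 0 ≤ |τ| := abs_nonneg τ
      have hτ3 : |τ| ^ 3 ≤ (N * σ) ^ 3 := by
        exact pow_le_pow_left₀ hτ0 hτ (3)
      have hbd : M * (B₁ * α ^ 3 * |τ| + (Real.pi / 3) * B₂ * α ^ 7 * |τ| ^ 3) ≤
          α * M * (B₁ * c₀ * N + (Real.pi / 3) * B₂ * c₀ ^ 3 * N ^ 3) := by
        rw [hσ] at hτ hτ3
        have hπ := Real.pi_pos
        have h1 : B₁ * α ^ 3 * |τ| ≤ B₁ * c₀ * N * α := by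
          calc B₁ * α ^ 3 * |τ| ≤ B₁ * α ^ 3 * (N * (c₀ / α ^ 2)) :=
                mul_le_mul_of_nonneg_left hτ (by positivity)
            _ = B₁ * c₀ * N * α := by field_simp
        have h3 : (Real.pi / 3) * B₂ * α ^ 7 * |τ| ^ 3 ≤
            (Real.pi / 3) * B₂ * c₀ ^ 3 * N ^ 3 * α := by
          calc (Real.pi / 3) * B₂ * α ^ 7 * |τ| ^ 3
              ≤ (Real.pi / 3) * B₂ * α ^ 7 * (N * (c₀ / α ^ 2)) ^ 3 :=
                mul_le_mul_of_nonneg_left hτ3 (by positivity)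
            _ = (Real.pi / 3) * B₂ * c₀ ^ 3 * N ^ 3 * α := by field_simp
        calc M * (B₁ * α ^ 3 * |τ| + (Real.pi / 3) * B₂ * α ^ 7 * |τ| ^ 3)
            ≤ M * (B₁ * c₀ * N * α + (Real.pi / 3) * B₂ * c₀ ^ 3 * N ^ 3 * α) :=
              mul_le_mul_of_nonneg_left (add_le_add h1 h3) hM
          _ = α * M * (B₁ * c₀ * N + (Real.pi / 3) * B₂ * c₀ ^ 3 * N ^ 3) := by ring
      calc ‖x (t + τ) - xm t τ‖ * (g (τ / σ) / σ)
          ≤ (M * (B₁ * α ^ 3 * |τ| + (Real.pi / 3) * B₂ * α ^ 7 * |τ| ^ 3)) * (g (τ / σ) / σ) :=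
            mul_le_mul_of_nonneg_right (hbound τ) (div_nonneg (hg0 _) hσ0.le)
        _ ≤ K * (g (τ / σ) / σ) :=
            mul_le_mul_of_nonneg_right hbd (div_nonneg (hg0 _) hσ0.le)
  have hmain : ‖∫ τ : ℝ, (x (t + τ) * ((g (τ / σ) / σ : ℝ) : ℂ) *
          Complex.exp (-((2 * Real.pi * η * τ + Real.pi * lam * τ ^ 2 : ℝ) : ℂ) * Complex.I) -
        xm t τ * ((g (τ / σ) / σ : ℝ) : ℂ) *
          Complex.exp (-((2 * Real.pi * η * τ + Real.pi * lam * τ ^ 2 : ℝ) : ℂ) * Complex.I))‖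
      ≤ ∫ τ : ℝ, K * (g (τ / σ) / σ) :=
    norm_integral_le_of_norm_le hgσint (Filter.Eventually.of_forall hptw)
  have hint1 : (∫ τ : ℝ, K * (g (τ / σ) / σ)) = K := by
    rw [integral_const_mul]
    have : (∫ τ : ℝ, g (τ / σ) / σ) = (∫ τ : ℝ, g (τ / σ)) / σ := by
      simp [integral_div]
    rw [this, Measure.integral_comp_div g, hg1, smul_eq_mul, abs_of_pos hσ0]
    field_simp
  calc ‖_‖ ≤ K := by rw [← hint1]; exact hmain
    _ = K := rfl
end

section
/- Let ℜ(η,λ) = Σ_{k=0}^{K} c_k ğ(σ(η - φ'_k), σ²(λ - φ''_k)) where c_k ∈ ℂ with |c_k| = A_k > 0, and suppose |ğ(a,b)| ≤ L/√(|a| + ρ|b|) for all (a,b) ≠ (0,0). Assume σ ≥ 1, the separation |φ'_k - φ'_ℓ| + ρ|φ''_k - φ''_ℓ| ≥ 2Δ for k ≠ ℓ, and σΔ ≥ (4ML/μ)² where M = Σ_k A_k and μ = min_k A_k. Then for any (η,λ) with σ|η - φ'_ℓ| + ρσ²|λ - φ''_ℓ| ≤ (4ML/μ)²: |ℜ(η,λ)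 - c_ℓ ğ(σ(η - φ'_ℓ), σ²(λ - φ''_ℓ))| ≤ ML/√(σΔ). -/
open Finset

/-- Lemma 4, equation (41): at any point of the cluster G_ℓ, the chirp-model chirplet
transform ℜ differs from the ℓ-th term by at most ML/√(σΔ). -/
theorem stmt_9 (K : ℕ) (c : Fin (K + 1) → ℂ) (A : Fin (K + 1) → ℝ)
    (φ' φ'' : Fin (K + 1) → ℝ) (gbr : ℝ → ℝ → ℂ) (σ ρ Δ L M μ : ℝ)
    (hcA : ∀ k, ‖c k‖ = A k) (hApos : ∀ k, 0 < A k)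
    (hg : ∀ a b : ℝ, (a, b) ≠ (0, 0) →
      ‖gbr a b‖ ≤ L / Real.sqrt (|a| + ρ * |b|))
    (hσ : 1 ≤ σ) (hρ : 0 ≤ ρ) (hΔ : 0 < Δ)
    (hsep : ∀ k l : Fin (K + 1), k ≠ l →
      2 * Δ ≤ |φ' k - φ' l| + ρ * |φ'' k - φ'' l|)
    (hM : M = ∑ k, A k)
    (hμ : μ = Finset.univ.inf' Finset.univ_nonempty A)
    (hσΔ : (4 * M * L / μ) ^ 2 ≤ σ * Δ)
    (l : Fin (K + 1)) (η lam : ℝ)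
    (hin : σ * |η - φ' l| + ρ * σ ^ 2 * |lam - φ'' l| ≤ (4 * M * L / μ) ^ 2) :
    ‖(∑ k, c k * gbr (σ * (η - φ' k)) (σ ^ 2 * (lam - φ'' k))) -
        c l * gbr (σ * (η - φ' l)) (σ ^ 2 * (lam - φ'' l))‖
      ≤ M * L / Real.sqrt (σ * Δ) := by
  have hσ0 : (0:ℝ) < σ := lt_of_lt_of_le one_pos hσ
  have hσΔpos : 0 < σ * Δ := mul_pos hσ0 hΔ
  have hL : 0 ≤ L := by
    have h := hg 1 0 (by norm_num)
    have h2 := (norm_nonneg (gbr 1 0)).trans h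
    simpa using h2
  have hsq : 0 < Real.sqrt (σ * Δ) := Real.sqrt_pos.2 hσΔpos
  have key : ∀ k ∈ Finset.univ.erase l,
      ‖c k * gbr (σ * (η - φ' k)) (σ ^ 2 * (lam - φ'' k))‖
        ≤ A k * (L / Real.sqrt (σ * Δ)) := by
    intro k hk
    have hkl : k ≠ l := Finset.ne_of_mem_erase hk
    set a := σ * (η - φ' k) with ha
    set b := σ ^ 2 * (lam - φ'' k) with hb
    have hsepkl := hsep k l hkl
    have t1 : |φ' k - φ' l| ≤ |η - φ' k| + |η - φ' l| := by
      have := abs_sub_le (φ' k) η (φ' l)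
      rwa [abs_sub_comm (φ' k) η] at this
    have t2 : |φ'' k - φ'' l| ≤ |lam - φ'' k| + |lam - φ'' l| := by
      have := abs_sub_le (φ'' k) lam (φ'' l)
      rwa [abs_sub_comm (φ'' k) lam] at this
    have hbig : σ * Δ ≤ |a| + ρ * |b| := by
      rw [ha, hb, abs_mul, abs_mul, abs_of_pos hσ0,
        abs_of_pos (pow_pos hσ0 2)]
      nlinarith [abs_nonneg (φ'' k - φ'' l), abs_nonneg (lam - φ'' k),
        abs_nonneg (η - φ' k), abs_nonneg (lam - φ'' l),
        mul_le_mul_of_nonneg_left t1 hσ0.le,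
        mul_le_mul_of_nonneg_left t2 (mul_nonneg hρ (sq_nonneg σ)),
        mul_le_mul_of_nonneg_left hsepkl hσ0.le,
        mul_nonneg hρ (abs_nonneg (φ'' k - φ'' l)),
        mul_le_mul_of_nonneg_right (mul_le_mul_of_nonneg_left
          (by nlinarith : σ ≤ σ ^ 2) hρ)
          (abs_nonneg (φ'' k - φ'' l))]
    have hne : (a, b) ≠ ((0:ℝ), (0:ℝ)) := by
      intro h
      rw [Prod.mk.injEq] at h
      rw [h.1, h.2] at hbig
      simp at hbig
      linarith
    have hgle := hg a b hne
    have hsqle : Real.sqrt (σ * Δ) ≤ Real.sqrt (|a| + ρ * |b|) :=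
      Real.sqrt_le_sqrt hbig
    have hdiv : L / Real.sqrt (|a| + ρ * |b|) ≤ L / Real.sqrt (σ * Δ) :=
      div_le_div_of_nonneg_left hL hsq hsqle
    calc ‖c k * gbr a b‖
        = A k * ‖gbr a b‖ := by rw [norm_mul, hcA]
      _ ≤ A k * (L / Real.sqrt (σ * Δ)) :=
          mul_le_mul_of_nonneg_left (hgle.trans hdiv) (hApos k).le
  rw [← Finset.sum_erase_add _ _ (Finset.mem_univ l), add_sub_cancel_right]
  calc ‖∑ k ∈ Finset.univ.erase l,
        c k * gbr (σ * (η - φ' k)) (σ ^ 2 * (lam - φ'' k))‖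
      ≤ ∑ k ∈ Finset.univ.erase l,
          ‖c k * gbr (σ * (η - φ' k)) (σ ^ 2 * (lam - φ'' k))‖ :=
        norm_sum_le _ _
    _ ≤ ∑ k ∈ Finset.univ.erase l, A k * (L / Real.sqrt (σ * Δ)) :=
        Finset.sum_le_sum key
    _ ≤ ∑ k, A k * (L / Real.sqrt (σ * Δ)) := by
        apply Finset.sum_le_sum_of_subset_of_nonneg (Finset.erase_subset _ _)
        intro k _ _
        exact mul_nonneg (hApos k).le (div_nonneg hL hsq.le)
    _ = M * L / Real.sqrt (σ * Δ) := by
        rw [← Finset.sum_mul, ← hM, mul_div_assoc]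
end

section
/- Under the same assumptions as in the cluster-perturbation lemma (ℜ(η,λ) = Σ_{k=0}^{K} c_k ğ(σ(η-φ'_k), σ²(λ-φ''_k)), |c_k| = A_k, |ğ(a,b)| ≤ L/√(|a|+ρ|b|), σ ≥ 1, separation |φ'_k - φ'_ℓ| + ρ|φ''_k - φ''_ℓ| ≥ 2Δ for k ≠ ℓ, and ğ(0,0) = 1), one has |ℜ(φ'_ℓ, φ''_ℓ) - c_ℓ| ≤ ML/√(2σΔ), where M = Σ_k A_k. -/
open Finset

/-- Lemma 4, equation (42): evaluating the chirp-model chirplet transform exactly at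
(φ'_ℓ, φ''_ℓ) recovers the ℓ-th coefficient up to error ML/√(2σΔ). -/
theorem stmt_10 (K : ℕ) (c : Fin (K + 1) → ℂ) (A : Fin (K + 1) → ℝ)
    (φ' φ'' : Fin (K + 1) → ℝ) (gbr : ℝ → ℝ → ℂ) (σ ρ Δ L M : ℝ)
    (hcA : ∀ k, ‖c k‖ = A k) (hApos : ∀ k, 0 < A k)
    (hg : ∀ a b : ℝ, (a, b) ≠ (0, 0) →
      ‖gbr a b‖ ≤ L / Real.sqrt (|a| + ρ * |b|))
    (hg00 : gbr 0 0 = 1)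
    (hσ : 1 ≤ σ) (hρ : 0 ≤ ρ) (hΔ : 0 < Δ)
    (hsep : ∀ k l : Fin (K + 1), k ≠ l →
      2 * Δ ≤ |φ' k - φ' l| + ρ * |φ'' k - φ'' l|)
    (hM : M = ∑ k, A k) (l : Fin (K + 1)) :
    ‖(∑ k, c k * gbr (σ * (φ' l - φ' k)) (σ ^ 2 * (φ'' l - φ'' k))) - c l‖
      ≤ M * L / Real.sqrt (2 * σ * Δ) := by
  have hσ0 : (0:ℝ) < σ := lt_of_lt_of_le one_pos hσ
  have hL : 0 ≤ L := by
    have h := hg 1 0 (by simp)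
    simp at h
    exact le_trans (norm_nonneg _) h
  have hS : 0 < Real.sqrt (2 * σ * Δ) := Real.sqrt_pos.2 (by positivity)
  have key : ∀ k : Fin (K + 1), k ≠ l →
      ‖c k * gbr (σ * (φ' l - φ' k)) (σ ^ 2 * (φ'' l - φ'' k))‖
        ≤ A k * (L / Real.sqrt (2 * σ * Δ)) := by
    intro k hk
    have hsepk := hsep l k (Ne.symm hk)
    have habs1 : |σ * (φ' l - φ' k)| = σ * |φ' l - φ' k| := by
      rw [abs_mul, abs_of_pos hσ0]
    have habs2 : |σ ^ 2 * (φ'' l - φ'' k)| = σ ^ 2 * |φ'' l - φ'' k| := by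
      rw [abs_mul, abs_of_pos (by positivity)]
    have hlow : 2 * σ * Δ ≤
        |σ * (φ' l - φ' k)| + ρ * |σ ^ 2 * (φ'' l - φ'' k)| := by
      rw [habs1, habs2]
      have h1 : 0 ≤ |φ'' l - φ'' k| := abs_nonneg _
      have hσ2 : σ ≤ σ ^ 2 := by nlinarith
      nlinarith [mul_le_mul_of_nonneg_left hsepk hσ0.le,
        mul_le_mul_of_nonneg_left (mul_le_mul_of_nonneg_right hσ2 h1) hρ]
    have hne : ((σ * (φ' l - φ' k)), (σ ^ 2 * (φ'' l - φ'' k))) ≠ ((0:ℝ), (0:ℝ)) := by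
      intro h
      rw [Prod.mk.injEq] at h
      rw [h.1, h.2] at hlow
      simp at hlow
      nlinarith
    have hgb := hg _ _ hne
    have hmono : L / Real.sqrt (|σ * (φ' l - φ' k)| + ρ * |σ ^ 2 * (φ'' l - φ'' k)|)
        ≤ L / Real.sqrt (2 * σ * Δ) := by
      gcongr
    rw [norm_mul, hcA]
    exact mul_le_mul_of_nonneg_left (le_trans hgb hmono) (le_of_lt (hApos k))
  have hsplit :
      (∑ k, c k * gbr (σ * (φ' l - φ' k)) (σ ^ 2 * (φ'' l - φ'' k))) - c l
        = ∑ k ∈ univ \ {l}, c k * gbr (σ * (φ' l - φ' k)) (σ ^ 2 * (φ'' l - φ'' k)) := by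
    rw [Finset.sum_eq_sum_sdiff_singleton_add (mem_univ l)]
    simp [hg00]
  rw [hsplit]
  calc ‖∑ k ∈ univ \ {l},
          c k * gbr (σ * (φ' l - φ' k)) (σ ^ 2 * (φ'' l - φ'' k))‖
      ≤ ∑ k ∈ univ \ {l},
          ‖c k * gbr (σ * (φ' l - φ' k)) (σ ^ 2 * (φ'' l - φ'' k))‖ := by
        exact norm_sum_le _ _
    _ ≤ ∑ k ∈ univ \ {l}, A k * (L / Real.sqrt (2 * σ * Δ)) := by
        refine Finset.sum_le_sum ?_
        intro k hk
        exact key k (by simpa using (Finset.mem_sdiff.mp hk).2)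
    _ ≤ ∑ k, A k * (L / Real.sqrt (2 * σ * Δ)) := by
        refine Finset.sum_le_sum_of_subset_of_nonneg (Finset.sdiff_subset) ?_
        intro k _ _
        exact mul_nonneg (hApos k).le (by positivity)
    _ = M * L / Real.sqrt (2 * σ * Δ) := by
        rw [← Finset.sum_mul, ← hM, mul_div_assoc]
end
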